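/- arXiv:math/9910060 — 2 statements merged into one kernel-verified Lean document; each statement's English description precedes it below -/
import Mathlib

section
/- The monoid Ψ_0 (the smallest W-stable submonoid of ℤ^n containing all partitions, where W is the semisymmetric group) consists exactly of all λ ∈ ℕ^n with Σ_{i odd} λ_i ≥ Σ_{i even} λ_i. -/
open Finset

/-- A permutation of `{1,…,n}` is parity preserving (`π(i) ≡ i mod 2`). -/
def ParityPerm {n : ℕ} (π : Equiv.Perm (Fin n)) : Prop :=
  ∀ i : Fin n, ((π i : ℕ)) % 2 = (i : ℕ) % 2

/-- Partitions inside `ℤ^n`: weakly decreasing tuples of nonnegative integers. -/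
def PartSet (n : ℕ) : Set (Fin n → ℤ) :=
  {lam | (∀ i j : Fin n, i ≤ j → lam j ≤ lam i) ∧ ∀ i, 0 ≤ lam i}

/-- `Ψ_0`: the smallest `W`-stable additive submonoid of `ℤ^n` containing all partitions. -/
noncomputable def Psi0 (n : ℕ) : AddSubmonoid (Fin n → ℤ) :=
  sInf {S | PartSet n ⊆ S ∧
    ∀ π : Equiv.Perm (Fin n), ParityPerm π → ∀ x ∈ S, (fun i => x (π i)) ∈ S}

/-! ### Auxiliary definitions and lemmas -/

/-- Indicator vector of a coordinate. -/
def ind {n : ℕ} (i : Fin n) : Fin n → ℤ := fun k => if k = i then 1 else 0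

lemma parityPerm_swap {n : ℕ} (a b : Fin n) (h : (a : ℕ) % 2 = (b : ℕ) % 2) :
    ParityPerm (Equiv.swap a b) := by
  intro k
  rcases eq_or_ne k a with rfl | ha
  · simp [Equiv.swap_apply_left, h.symm]
  rcases eq_or_ne k b with rfl | hb
  · simp [Equiv.swap_apply_right, h]
  · simp [Equiv.swap_apply_of_ne_of_ne ha hb]

lemma parityPerm_mul {n : ℕ} {π σ : Equiv.Perm (Fin n)} (hπ : ParityPerm π)
    (hσ : ParityPerm σ) : ParityPerm (π * σ) := by
  intro k
  have : (π * σ) k = π (σ k) := rfl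
  rw [this, hπ (σ k), hσ k]

lemma ind_mem {n : ℕ} (hn : 1 ≤ n) (i : Fin n) (hi : Even (i : ℕ)) :
    ind i ∈ Psi0 n := by
  rw [Psi0, AddSubmonoid.mem_sInf]
  intro S hS
  obtain ⟨hP, hW⟩ := hS
  set a : Fin n := ⟨0, hn⟩ with ha
  have hfirst : (fun k : Fin n => if k = a then (1:ℤ) else 0) ∈ PartSet n := by
    constructor
    · intro k l hkl
      by_cases hl : l = a
      · have hk : k = a := by
          subst hl
          refine le_antisymm hkl ?_
          simp [ha, Fin.le_def]
        simp [hl, hk]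
      · simp only [if_neg hl]
        split <;> norm_num
    · intro k; dsimp only; split <;> norm_num
  have hpar : ParityPerm (Equiv.swap a i) := by
    apply parityPerm_swap
    simp only [ha]
    rw [Nat.even_iff] at hi
    simp [hi]
  have hmem := hW (Equiv.swap a i) hpar _ (hP hfirst)
  have heq : (fun k : Fin n => if Equiv.swap a i k = a then (1:ℤ) else 0) = ind i := by
    funext k
    have hiff : Equiv.swap a i k = a ↔ k = i := by
      constructor
      · intro h
        have h2 := congrArg (Equiv.swap a i) h
        simpa [Equiv.swap_apply_self, Equiv.swap_apply_left] using h2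
      · intro h; rw [h]; exact Equiv.swap_apply_right a i
    simp only [ind, hiff]
  rw [heq] at hmem
  exact hmem

lemma pair_mem {n : ℕ} (hn : 1 ≤ n) (i j : Fin n) (hi : Even (i : ℕ)) (hj : Odd (j : ℕ)) :
    ind i + ind j ∈ Psi0 n := by
  rw [Psi0, AddSubmonoid.mem_sInf]
  intro S hS
  obtain ⟨hP, hW⟩ := hS
  have hn2 : 1 < n := by
    have h1 : 1 ≤ (j : ℕ) := hj.pos
    have h2 := j.isLt
    omega
  set a : Fin n := ⟨0, hn⟩ with ha
  set b : Fin n := ⟨1, hn2⟩ with hb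
  have hbodd : Odd (b : ℕ) := by simp [hb]
  have hij : i ≠ j := by
    intro h; rw [h] at hi; exact (Nat.not_odd_iff_even.mpr hi) hj
  have hib : i ≠ b := by
    intro h; rw [h] at hi; exact (Nat.not_odd_iff_even.mpr hi) hbodd
  have hja : j ≠ a := by
    intro h
    rw [h] at hj
    simp only [ha] at hj
    exact (Nat.not_odd_iff_even.mpr (Even.zero)) hj
  have hba : b ≠ a := by simp [ha, hb, Fin.ext_iff]
  have hf2 : (fun k : Fin n => if (k : ℕ) < 2 then (1:ℤ) else 0) ∈ PartSet n := by
    constructor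
    · intro k l hkl
      by_cases hl : (l : ℕ) < 2
      · have hk : (k : ℕ) < 2 := lt_of_le_of_lt hkl hl
        simp [hl, hk]
      · simp only [if_neg hl]
        split <;> norm_num
    · intro k; dsimp only; split <;> norm_num
  set π : Equiv.Perm (Fin n) := Equiv.swap a i * Equiv.swap b j with hπdef
  have hpar : ParityPerm π := by
    apply parityPerm_mul
    · apply parityPerm_swap
      rw [Nat.even_iff] at hi
      simp [ha, hi]
    · apply parityPerm_swap
      rw [Nat.odd_iff] at hj
      simp [hb, hj]
  have hmem := hW π hpar _ (hP hf2)
  have hπi : π i = a := by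
    show Equiv.swap a i (Equiv.swap b j i) = a
    rw [Equiv.swap_apply_of_ne_of_ne hib hij, Equiv.swap_apply_right]
  have hπj : π j = b := by
    show Equiv.swap a i (Equiv.swap b j j) = b
    rw [Equiv.swap_apply_right, Equiv.swap_apply_of_ne_of_ne hba hib.symm]
  have heq : (fun k : Fin n => if ((π k : Fin n) : ℕ) < 2 then (1:ℤ) else 0)
      = ind i + ind j := by
    funext k
    have hva : ((a : Fin n) : ℕ) = 0 := rfl
    have hvb : ((b : Fin n) : ℕ) = 1 := rfl
    rcases eq_or_ne k i with rfl | hki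
    · rw [hπi, Pi.add_apply]
      simp only [ind, if_pos rfl, if_neg hij, hva]
      norm_num
    rcases eq_or_ne k j with rfl | hkj
    · rw [hπj, Pi.add_apply]
      simp only [ind, if_neg (Ne.symm hij), if_pos rfl, hvb]
      norm_num
    · have h1 : π k ≠ a := by
        intro h; exact hki (π.injective (h.trans hπi.symm))
      have h2 : π k ≠ b := by
        intro h; exact hkj (π.injective (h.trans hπj.symm))
      have h1' : (π k : ℕ) ≠ 0 := fun hh => h1 (Fin.ext (by rw [hh, hva]))
      have h2' : (π k : ℕ) ≠ 1 := fun hh => h2 (Fin.ext (by rw [hh, hvb]))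
      have h3 : ¬ ((π k : ℕ) < 2) := by omega
      rw [if_neg h3, Pi.add_apply]
      simp only [ind, if_neg hki, if_neg hkj]
      norm_num
  rw [heq] at hmem
  exact hmem

/-- The candidate submonoid: nonnegative vectors with odd-sum ≤ even-sum. -/
def goodM (n : ℕ) : AddSubmonoid (Fin n → ℤ) where
  carrier := {lam | (∀ i, 0 ≤ lam i) ∧
    ∑ i ∈ Finset.univ.filter (fun i : Fin n => Odd (i : ℕ)), lam i ≤
      ∑ i ∈ Finset.univ.filter (fun i : Fin n => Even (i : ℕ)), lam i}
  zero_mem' := by simp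
  add_mem' := by
    rintro x y ⟨hx0, hx⟩ ⟨hy0, hy⟩
    refine ⟨fun i => add_nonneg (hx0 i) (hy0 i), ?_⟩
    simp only [Pi.add_apply, Finset.sum_add_distrib]
    exact add_le_add hx hy

lemma sum_odd_add_sum_even {n : ℕ} (lam : Fin n → ℤ) :
    ∑ i ∈ Finset.univ.filter (fun i : Fin n => Odd (i : ℕ)), lam i +
      ∑ i ∈ Finset.univ.filter (fun i : Fin n => Even (i : ℕ)), lam i
      = ∑ i, lam i := by
  have h := Finset.sum_filter_add_sum_filter_not Finset.univ
    (fun i : Fin n => Odd (i : ℕ)) lam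
  have hnot : (Finset.univ.filter (fun i : Fin n => ¬ Odd (i : ℕ)))
      = Finset.univ.filter (fun i : Fin n => Even (i : ℕ)) := by
    apply Finset.filter_congr
    intro i _
    exact Nat.not_odd_iff_even
  rw [hnot] at h
  exact h

lemma ind_sum_filter {n : ℕ} (i : Fin n) (p : Fin n → Prop) [DecidablePred p] (hp : p i) :
    ∑ k ∈ Finset.univ.filter p, ind i k = 1 := by
  rw [show (fun k => ind i k) = fun k => if k = i then (1:ℤ) else 0 from rfl]
  rw [Finset.sum_ite_eq' (Finset.univ.filter p) i (fun _ => (1:ℤ))]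
  simp [hp]

lemma ind_sum_filter_not {n : ℕ} (i : Fin n) (p : Fin n → Prop) [DecidablePred p]
    (hp : ¬ p i) : ∑ k ∈ Finset.univ.filter p, ind i k = 0 := by
  rw [show (fun k => ind i k) = fun k => if k = i then (1:ℤ) else 0 from rfl]
  rw [Finset.sum_ite_eq' (Finset.univ.filter p) i (fun _ => (1:ℤ))]
  simp [hp]

/-- Main induction: every nonnegative vector with odd-sum ≤ even-sum lies in `Psi0 n`. -/
lemma main_induction {n : ℕ} (hn : 1 ≤ n) : ∀ N : ℕ, ∀ lam : Fin n → ℤ,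
    (∀ i, 0 ≤ lam i) →
    (∑ i ∈ Finset.univ.filter (fun i : Fin n => Odd (i : ℕ)), lam i ≤
      ∑ i ∈ Finset.univ.filter (fun i : Fin n => Even (i : ℕ)), lam i) →
    (∑ i, lam i).toNat ≤ N → lam ∈ Psi0 n := by
  intro N
  induction N with
  | zero =>
    intro lam h0 _ hN
    have hsum0 : ∑ i, lam i = 0 := by
      have hnn : 0 ≤ ∑ i, lam i := Finset.sum_nonneg fun i _ => h0 i
      omega
    have : ∀ i ∈ Finset.univ, lam i = 0 :=
      (Finset.sum_eq_zero_iff_of_nonneg fun i _ => h0 i).mp hsum0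
    have hlam : lam = 0 := funext fun i => this i (Finset.mem_univ i)
    rw [hlam]
    exact (Psi0 n).zero_mem
  | succ N ih =>
    intro lam h0 hle hN
    by_cases hodd : ∃ j : Fin n, Odd (j : ℕ) ∧ 0 < lam j
    · obtain ⟨j, hj, hjpos⟩ := hodd
      -- odd sum is positive, hence even sum is positive, hence some even coord is positive
      have hoddpos : 0 < ∑ i ∈ Finset.univ.filter (fun i : Fin n => Odd (i : ℕ)), lam i :=
        Finset.sum_pos' (fun i _ => h0 i) ⟨j, by simp [hj], hjpos⟩
      have hevenpos : 0 < ∑ i ∈ Finset.univ.filter (fun i : Fin n => Even (i : ℕ)), lam i :=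
        lt_of_lt_of_le hoddpos hle
      have hex : ∃ i : Fin n, Even (i : ℕ) ∧ 0 < lam i := by
        by_contra hcon
        push_neg at hcon
        have hz : ∑ i ∈ Finset.univ.filter (fun i : Fin n => Even (i : ℕ)), lam i ≤ 0 :=
          Finset.sum_nonpos fun i hi => hcon i (Finset.mem_filter.mp hi).2
        omega
      obtain ⟨i, hi, hipos⟩ := hex
      have hij : i ≠ j := by
        intro h; rw [h] at hi; exact (Nat.not_odd_iff_even.mpr hi) hj
      set mu : Fin n → ℤ := lam - (ind i + ind j) with hmu
      have hmu0 : ∀ k, 0 ≤ mu k := by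
        intro k
        simp only [hmu, Pi.sub_apply, Pi.add_apply, ind]
        rcases eq_or_ne k i with rfl | hki
        · rw [if_pos rfl, if_neg hij]
          omega
        rcases eq_or_ne k j with rfl | hkj
        · rw [if_neg hki, if_pos rfl]
          omega
        · rw [if_neg hki, if_neg hkj]
          have := h0 k
          omega
      have hoddsum : ∑ k ∈ Finset.univ.filter (fun k : Fin n => Odd (k : ℕ)), mu k
          = (∑ k ∈ Finset.univ.filter (fun k : Fin n => Odd (k : ℕ)), lam k) - 1 := by
        simp only [hmu, Pi.sub_apply, Pi.add_apply, Finset.sum_sub_distrib,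
          Finset.sum_add_distrib]
        rw [ind_sum_filter_not i _ (Nat.not_odd_iff_even.mpr hi),
          ind_sum_filter j _ hj]
        ring
      have hevensum : ∑ k ∈ Finset.univ.filter (fun k : Fin n => Even (k : ℕ)), mu k
          = (∑ k ∈ Finset.univ.filter (fun k : Fin n => Even (k : ℕ)), lam k) - 1 := by
        simp only [hmu, Pi.sub_apply, Pi.add_apply, Finset.sum_sub_distrib,
          Finset.sum_add_distrib]
        rw [ind_sum_filter i _ hi, ind_sum_filter_not j _ (Nat.not_even_iff_odd.mpr hj)]
        ring
      have htot : ∑ k, mu k = (∑ k, lam k) - 2 := by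
        have h1 := sum_odd_add_sum_even mu
        have h2 := sum_odd_add_sum_even lam
        omega
      have hN' : (∑ k, mu k).toNat ≤ N := by
        have hnn : 0 ≤ ∑ k, mu k := Finset.sum_nonneg fun k _ => hmu0 k
        omega
      have hmumem : mu ∈ Psi0 n := by
        apply ih mu hmu0 _ hN'
        omega
      have : lam = mu + (ind i + ind j) := by
        simp [hmu]
      rw [this]
      exact (Psi0 n).add_mem hmumem (pair_mem hn i j hi hj)
    · -- all odd coordinates vanish
      push_neg at hodd
      have hoddzero : ∀ k : Fin n, Odd (k : ℕ) → lam k = 0 := fun k hk =>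
        le_antisymm (hodd k hk) (h0 k)
      have hoddsum0 : ∑ k ∈ Finset.univ.filter (fun k : Fin n => Odd (k : ℕ)), lam k = 0 := by
        apply Finset.sum_eq_zero
        intro k hk
        simp only [Finset.mem_filter] at hk
        exact hoddzero k hk.2
      by_cases heven : ∃ i : Fin n, Even (i : ℕ) ∧ 0 < lam i
      · obtain ⟨i, hi, hipos⟩ := heven
        set mu : Fin n → ℤ := lam - ind i with hmu
        have hmu0 : ∀ k, 0 ≤ mu k := by
          intro k
          simp only [hmu, Pi.sub_apply, ind]
          rcases eq_or_ne k i with rfl | hki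
          · rw [if_pos rfl]
            omega
          · rw [if_neg hki]
            have := h0 k
            omega
        have hoddsum : ∑ k ∈ Finset.univ.filter (fun k : Fin n => Odd (k : ℕ)), mu k
            = 0 := by
          simp only [hmu, Pi.sub_apply, Finset.sum_sub_distrib]
          rw [ind_sum_filter_not i _ (Nat.not_odd_iff_even.mpr hi), hoddsum0]
          ring
        have hevensum : ∑ k ∈ Finset.univ.filter (fun k : Fin n => Even (k : ℕ)), mu k
            = (∑ k ∈ Finset.univ.filter (fun k : Fin n => Even (k : ℕ)), lam k) - 1 := by
          simp only [hmu, Pi.sub_apply, Finset.sum_sub_distrib]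
          rw [ind_sum_filter i _ hi]
        have hevenpos : 0 < ∑ k ∈ Finset.univ.filter (fun k : Fin n => Even (k : ℕ)), lam k :=
          Finset.sum_pos' (fun k _ => h0 k) ⟨i, by simp [hi], hipos⟩
        have htot : ∑ k, mu k = (∑ k, lam k) - 1 := by
          have h1 := sum_odd_add_sum_even mu
          have h2 := sum_odd_add_sum_even lam
          omega
        have hN' : (∑ k, mu k).toNat ≤ N := by
          have hnn : 0 ≤ ∑ k, mu k := Finset.sum_nonneg fun k _ => hmu0 k
          omega
        have hmumem : mu ∈ Psi0 n := by
          apply ih mu hmu0 _ hN'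
          omega
        have : lam = mu + ind i := by simp [hmu]
        rw [this]
        exact (Psi0 n).add_mem hmumem (ind_mem hn i hi)
      · push_neg at heven
        have hlam : lam = 0 := by
          funext k
          rcases Nat.even_or_odd (k : ℕ) with hk | hk
          · exact le_antisymm (heven k hk) (h0 k)
          · exact hoddzero k hk
        rw [hlam]
        exact (Psi0 n).zero_mem

/-- `Ψ_0` consists of all `λ ∈ ℕ^n` with `∑_{i odd} λ_i ≥ ∑_{i even} λ_i` (1-based parity;
1-based odd positions are 0-based even positions). -/
theorem Psi0_eq_carrier (n : ℕ) (hn : 1 ≤ n) :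
    (Psi0 n : Set (Fin n → ℤ)) =
      {lam | (∀ i, 0 ≤ lam i) ∧
        ∑ i ∈ Finset.univ.filter (fun i : Fin n => Odd (i : ℕ)), lam i ≤
          ∑ i ∈ Finset.univ.filter (fun i : Fin n => Even (i : ℕ)), lam i} := by
  apply Set.eq_of_subset_of_subset
  · -- Psi0 ⊆ good : show goodM belongs to the defining family
    have hgood : goodM n ∈ {S : AddSubmonoid (Fin n → ℤ) | PartSet n ⊆ S ∧
        ∀ π : Equiv.Perm (Fin n), ParityPerm π → ∀ x ∈ S, (fun i => x (π i)) ∈ S} := by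
      constructor
      · -- partitions are in goodM
        rintro lam ⟨hdec, h0⟩
        refine ⟨h0, ?_⟩
        set f : Fin n → Fin n := fun k => ⟨(k : ℕ) - 1, lt_of_le_of_lt (Nat.sub_le _ _) k.isLt⟩
          with hf
        have step1 : ∑ k ∈ Finset.univ.filter (fun k : Fin n => Odd (k : ℕ)), lam k ≤
            ∑ k ∈ Finset.univ.filter (fun k : Fin n => Odd (k : ℕ)), lam (f k) := by
          apply Finset.sum_le_sum
          intro k _
          apply hdec
          simp only [hf]
          rw [Fin.le_def]
          exact Nat.sub_le _ _
        have hinj : ∀ x ∈ Finset.univ.filter (fun k : Fin n => Odd (k : ℕ)),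
            ∀ y ∈ Finset.univ.filter (fun k : Fin n => Odd (k : ℕ)), f x = f y → x = y := by
          intro x hx y hy hxy
          simp only [Finset.mem_filter] at hx hy
          have hx1 : 1 ≤ (x : ℕ) := hx.2.pos
          have hy1 : 1 ≤ (y : ℕ) := hy.2.pos
          simp only [hf, Fin.mk.injEq] at hxy
          exact Fin.ext (by omega)
        have step2 : ∑ k ∈ Finset.univ.filter (fun k : Fin n => Odd (k : ℕ)), lam (f k)
            = ∑ k ∈ (Finset.univ.filter (fun k : Fin n => Odd (k : ℕ))).image f, lam k :=
          (Finset.sum_image hinj).symm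
        have hsub : (Finset.univ.filter (fun k : Fin n => Odd (k : ℕ))).image f ⊆
            Finset.univ.filter (fun k : Fin n => Even (k : ℕ)) := by
          intro x hx
          simp only [Finset.mem_image, Finset.mem_filter] at hx ⊢
          obtain ⟨y, hy, rfl⟩ := hx
          refine ⟨Finset.mem_univ _, ?_⟩
          have h2 := hy.2
          rw [Nat.odd_iff] at h2
          have h3 : ((f y : Fin n) : ℕ) = (y : ℕ) - 1 := rfl
          rw [Nat.even_iff, h3]
          omega
        have step3 : ∑ k ∈ (Finset.univ.filter (fun k : Fin n => Odd (k : ℕ))).image f, lam k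
            ≤ ∑ k ∈ Finset.univ.filter (fun k : Fin n => Even (k : ℕ)), lam k :=
          Finset.sum_le_sum_of_subset_of_nonneg hsub fun k _ _ => h0 k
        exact le_trans step1 (le_of_le_of_eq (le_of_eq step2) rfl |>.trans step3)
      · -- stability under parity permutations
        rintro π hπ x ⟨h0, hle⟩
        refine ⟨fun i => h0 (π i), ?_⟩
        have hoddeq : ∑ i ∈ Finset.univ.filter (fun i : Fin n => Odd (i : ℕ)), x (π i)
            = ∑ i ∈ Finset.univ.filter (fun i : Fin n => Odd (i : ℕ)), x i := by
          apply Finset.sum_equiv π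
          · intro i
            simp only [Finset.mem_filter, Finset.mem_univ, true_and, Nat.odd_iff]
            rw [hπ i]
          · intro i _; rfl
        have heveneq : ∑ i ∈ Finset.univ.filter (fun i : Fin n => Even (i : ℕ)), x (π i)
            = ∑ i ∈ Finset.univ.filter (fun i : Fin n => Even (i : ℕ)), x i := by
          apply Finset.sum_equiv π
          · intro i
            simp only [Finset.mem_filter, Finset.mem_univ, true_and, Nat.even_iff]
            rw [hπ i]
          · intro i _; rfl
        rw [hoddeq, heveneq]
        exact hle
    intro x hx
    exact sInf_le hgood hx
  · intro lam hlam
    obtain ⟨h0, hle⟩ := hlam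
    exact main_induction hn (∑ i, lam i).toNat lam h0 hle le_rfl
end

section
/- The monoid Ψ_1 := Ψ_0 + Φ^+ consists exactly of all λ ∈ ℤ^n such that the odd part (λ_1, λ_3, …) and the even part (λ_2, λ_4, …) are both dominance-nonnegative (i.e., all partial sums λ_1, λ_1+λ_3, …, and λ_2, λ_2+λ_4, …, are ≥ 0) and Σ_{i even} λ_i ≤ Σ_{i odd} λ_i. -/
open Finset

/-- The simple-root monoid `Φ⁺`, generated by `ε_i − ε_{i+2}` (0-based here). -/
noncomputable def PhiPlus (n : ℕ) : AddSubmonoid (Fin n → ℤ) :=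
  AddSubmonoid.closure
    {v | ∃ i : ℕ, ∃ h : i + 2 < n,
      v = Pi.single (⟨i, by omega⟩ : Fin n) 1 - Pi.single (⟨i + 2, h⟩ : Fin n) 1}

/-! ### Auxiliary definitions and lemmas -/

/-- Parity-restricted prefix sum: sum of `lam k` over `k ≤ i` with `k ≡ i (mod 2)`. -/
def pref (n : ℕ) (lam : Fin n → ℤ) (i : ℕ) : ℤ :=
  ∑ k ∈ Finset.univ.filter (fun k : Fin n => (k : ℕ) ≤ i ∧ (k : ℕ) % 2 = i % 2), lam k

lemma pref_step {n : ℕ} (lam : Fin n → ℤ) {i : ℕ} (h : i + 2 < n) :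
    pref n lam (i + 2) = pref n lam i + lam ⟨i + 2, h⟩ := by
  unfold pref
  have : Finset.univ.filter (fun k : Fin n => (k : ℕ) ≤ i + 2 ∧ (k : ℕ) % 2 = (i + 2) % 2)
      = insert (⟨i + 2, h⟩ : Fin n)
        (Finset.univ.filter (fun k : Fin n => (k : ℕ) ≤ i ∧ (k : ℕ) % 2 = i % 2)) := by
    ext k
    simp only [mem_filter, mem_univ, true_and, mem_insert, Fin.ext_iff]
    omega
  rw [this, Finset.sum_insert (by simp)]
  ring

lemma pref_small {n : ℕ} (lam : Fin n → ℤ) {i : ℕ} (h2 : i < 2) (h : i < n) :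
    pref n lam i = lam ⟨i, h⟩ := by
  unfold pref
  have : Finset.univ.filter (fun k : Fin n => (k : ℕ) ≤ i ∧ (k : ℕ) % 2 = i % 2)
      = {(⟨i, h⟩ : Fin n)} := by
    ext k
    simp only [mem_filter, mem_univ, true_and, mem_singleton, Fin.ext_iff]
    omega
  rw [this, Finset.sum_singleton]

lemma pref_eq_E {n : ℕ} (lam : Fin n → ℤ) {i : ℕ} (hi : i < n) (he : i % 2 = 0) :
    pref n lam i =
      ∑ k ∈ Finset.univ.filter (fun k : Fin n => k ≤ ⟨i, hi⟩ ∧ Even (k : ℕ)), lam k := by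
  apply Finset.sum_congr _ (fun _ _ => rfl)
  ext k
  simp only [mem_filter, mem_univ, true_and, Fin.le_def, Nat.even_iff]
  omega

lemma pref_eq_O {n : ℕ} (lam : Fin n → ℤ) {i : ℕ} (hi : i < n) (he : i % 2 = 1) :
    pref n lam i =
      ∑ k ∈ Finset.univ.filter (fun k : Fin n => k ≤ ⟨i, hi⟩ ∧ Odd (k : ℕ)), lam k := by
  apply Finset.sum_congr _ (fun _ _ => rfl)
  ext k
  simp only [mem_filter, mem_univ, true_and, Fin.le_def, Nat.odd_iff]
  omega

lemma pref_tot_E {n : ℕ} (lam : Fin n → ℤ) {i : ℕ} (hi : i < n) (hi2 : n - 2 ≤ i)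
    (he : i % 2 = 0) :
    pref n lam i = ∑ k ∈ Finset.univ.filter (fun k : Fin n => Even (k : ℕ)), lam k := by
  apply Finset.sum_congr _ (fun _ _ => rfl)
  ext k
  have := k.isLt
  simp only [mem_filter, mem_univ, true_and, Nat.even_iff]
  omega

lemma pref_tot_O {n : ℕ} (lam : Fin n → ℤ) {i : ℕ} (hi : i < n) (hi2 : n - 2 ≤ i)
    (he : i % 2 = 1) :
    pref n lam i = ∑ k ∈ Finset.univ.filter (fun k : Fin n => Odd (k : ℕ)), lam k := by
  apply Finset.sum_congr _ (fun _ _ => rfl)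
  ext k
  have := k.isLt
  simp only [mem_filter, mem_univ, true_and, Nat.odd_iff]
  omega

/-- The root vector `ε_i − ε_{i+2}` as a bare function. -/
def gen (n i : ℕ) : Fin n → ℤ :=
  fun k => (if (k : ℕ) = i then 1 else 0) - (if (k : ℕ) = i + 2 then 1 else 0)

/-- The `Ψ_0`-part in the decomposition of an element of the carrier. -/
def muF (n : ℕ) (lam : Fin n → ℤ) : Fin n → ℤ :=
  fun k => if n - 2 ≤ (k : ℕ) then pref n lam (k : ℕ) else 0

lemma gen_eq {n i : ℕ} (h : i + 2 < n) :
    gen n i = Pi.single (⟨i, by omega⟩ : Fin n) 1 - Pi.single (⟨i + 2, h⟩ : Fin n) 1 := by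
  funext k
  simp [gen, Pi.single_apply, Fin.ext_iff]

lemma gen_mem {n i : ℕ} (h : i + 2 < n) : gen n i ∈ PhiPlus n := by
  apply AddSubmonoid.subset_closure
  exact ⟨i, h, gen_eq h⟩

lemma smul_gen_mem {n i : ℕ} (h : i + 2 < n) {c : ℤ} (hc : 0 ≤ c) :
    c • gen n i ∈ PhiPlus n := by
  rw [← Int.toNat_of_nonneg hc, natCast_zsmul]
  exact nsmul_mem (gen_mem h) c.toNat

lemma sum_ite_shift (f : ℕ → ℤ) (m v : ℕ) :
    ∑ i ∈ Finset.range m, (if v = i + 2 then f i else 0)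
      = if 2 ≤ v ∧ v - 2 < m then f (v - 2) else 0 := by
  by_cases h2 : 2 ≤ v
  · obtain ⟨w, rfl⟩ : ∃ w, v = w + 2 := ⟨v - 2, by omega⟩
    simp only [Nat.add_right_cancel_iff]
    rw [Finset.sum_ite_eq]
    simp only [mem_range]
    split_ifs with h h' h' <;> first | rfl | omega
  · rw [if_neg (by omega), Finset.sum_eq_zero]
    intro i _
    rw [if_neg (by omega)]

/-- The key decomposition identity. -/
lemma key_identity (n : ℕ) (lam : Fin n → ℤ) :
    lam = muF n lam + ∑ i ∈ Finset.range (n - 2), pref n lam i • gen n i := by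
  funext k
  have hk := k.isLt
  simp only [Pi.add_apply, Finset.sum_apply, Pi.smul_apply, smul_eq_mul, gen, muF,
    mul_sub, mul_one, mul_zero, mul_ite, Finset.sum_sub_distrib]
  rw [Finset.sum_ite_eq, sum_ite_shift (fun i => pref n lam i)]
  have hcond : (2 ≤ (k : ℕ) ∧ (k : ℕ) - 2 < n - 2) ↔ 2 ≤ (k : ℕ) := by omega
  simp only [Finset.mem_range, hcond]
  have hB : pref n lam (k : ℕ)
      = (if 2 ≤ (k : ℕ) then pref n lam ((k : ℕ) - 2) else 0) + lam k := by
    by_cases h2 : 2 ≤ (k : ℕ)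
    · obtain ⟨w, hw⟩ : ∃ w, (k : ℕ) = w + 2 := ⟨(k : ℕ) - 2, by omega⟩
      have h3 : w + 2 < n := hw ▸ hk
      have hl : lam ⟨w + 2, h3⟩ = lam k := by congr 1; exact Fin.ext hw.symm
      rw [if_pos h2, hw, Nat.add_sub_cancel, pref_step lam h3, hl]
    · rw [if_neg h2, pref_small lam (by omega) hk, zero_add]
  by_cases h2 : 2 ≤ (k : ℕ)
  · rw [if_pos h2] at hB ⊢
    by_cases hlt : (k : ℕ) < n - 2
    · rw [if_pos hlt, if_neg (by omega)]; linarith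
    · rw [if_neg hlt, if_pos (by omega)]; linarith
  · rw [if_neg h2] at hB ⊢
    by_cases hlt : (k : ℕ) < n - 2
    · rw [if_pos hlt, if_neg (by omega)]; linarith
    · rw [if_neg hlt, if_pos (by omega)]; linarith

lemma swap_parity {n : ℕ} (x y : Fin n) (h : (x : ℕ) % 2 = (y : ℕ) % 2) (i : Fin n) :
    ((Equiv.swap x y i : Fin n) : ℕ) % 2 = (i : ℕ) % 2 := by
  rw [Equiv.swap_apply_def]
  split_ifs with h1 h2
  · rw [h1]; omega
  · rw [h2]; omega
  · rfl

lemma muF_mem_Psi0 {n : ℕ} (hn : 2 ≤ n) (lam : Fin n → ℤ)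
    (hb : 0 ≤ pref n lam (n - 1 - n % 2))
    (hab : pref n lam (n - 1 - n % 2) ≤ pref n lam (n - 2 + n % 2)) :
    muF n lam ∈ Psi0 n := by
  set pe := n - 2 + n % 2 with hpe
  set po := n - 1 - n % 2 with hpo
  have hpe2 : pe % 2 = 0 := by omega
  have hpo2 : po % 2 = 1 := by omega
  have hpen : pe < n := by omega
  have hpon : po < n := by omega
  set ca := pref n lam pe with hca
  set cb := pref n lam po with hcb
  rw [Psi0, AddSubmonoid.mem_sInf]
  rintro S ⟨hPart, hPerm⟩
  set ν : Fin n → ℤ := fun j => if (j : ℕ) = 0 then ca else if (j : ℕ) = 1 then cb else 0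
    with hν
  have hνP : ν ∈ PartSet n := by
    constructor
    · intro i j hij
      have hij' : (i : ℕ) ≤ (j : ℕ) := hij
      simp only [hν]
      split_ifs <;> omega
    · intro i
      simp only [hν]
      split_ifs <;> omega
  set a : Fin n := ⟨0, by omega⟩ with hA
  set b : Fin n := ⟨pe, hpen⟩ with hB
  set c : Fin n := ⟨1, by omega⟩ with hC
  set d : Fin n := ⟨po, hpon⟩ with hD
  have hab' : (a : ℕ) % 2 = (b : ℕ) % 2 := by show 0 % 2 = pe % 2; omega
  have hcd' : (c : ℕ) % 2 = (d : ℕ) % 2 := by show 1 % 2 = po % 2; omega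
  set π : Equiv.Perm (Fin n) := (Equiv.swap a b).trans (Equiv.swap c d) with hπ
  have hπP : ParityPerm π := by
    intro i
    have h1 := swap_parity a b hab' i
    have h2 := swap_parity c d hcd' (Equiv.swap a b i)
    simp only [hπ, Equiv.trans_apply]
    omega
  have hmem := hPerm π hπP ν (hPart hνP)
  convert hmem using 1
  funext i
  simp only [hπ, Equiv.trans_apply]
  have hne : ∀ (x y : Fin n), (x : ℕ) ≠ (y : ℕ) → x ≠ y := fun x y h => Fin.ne_of_val_ne h
  by_cases hipe : (i : ℕ) = pe
  · have hib : i = b := Fin.ext hipe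
    rw [hib, Equiv.swap_apply_right,
      Equiv.swap_apply_of_ne_of_ne (hne a c (by show (0:ℕ) ≠ 1; omega))
        (hne a d (by show (0:ℕ) ≠ po; omega))]
    show (if n - 2 ≤ pe then pref n lam pe else 0)
      = (if (0:ℕ) = 0 then ca else if (0:ℕ) = 1 then cb else 0)
    rw [if_pos (by omega), if_pos rfl]
  · by_cases hipo : (i : ℕ) = po
    · have hid : i = d := Fin.ext hipo
      rw [hid, Equiv.swap_apply_of_ne_of_ne (hne d a (by show po ≠ (0:ℕ); omega))
          (hne d b (by show po ≠ pe; omega)), Equiv.swap_apply_right]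
      show (if n - 2 ≤ po then pref n lam po else 0)
        = (if (1:ℕ) = 0 then ca else if (1:ℕ) = 1 then cb else 0)
      rw [if_pos (by omega), if_neg (by omega), if_pos rfl]
    · by_cases hi0 : (i : ℕ) = 0
      · have hia : i = a := Fin.ext hi0
        rw [hia, Equiv.swap_apply_left,
          Equiv.swap_apply_of_ne_of_ne (hne b c (by show pe ≠ (1:ℕ); omega))
            (hne b d (by show pe ≠ po; omega))]
        show (if n - 2 ≤ (0:ℕ) then pref n lam (0:ℕ) else 0)
          = (if pe = 0 then ca else if pe = 1 then cb else 0)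
        rw [if_neg (by omega), if_neg (by omega), if_neg (by omega)]
      · by_cases hi1 : (i : ℕ) = 1
        · have hic : i = c := Fin.ext hi1
          rw [hic, Equiv.swap_apply_of_ne_of_ne (hne c a (by show (1:ℕ) ≠ 0; omega))
              (hne c b (by show (1:ℕ) ≠ pe; omega)), Equiv.swap_apply_left]
          show (if n - 2 ≤ (1:ℕ) then pref n lam (1:ℕ) else 0)
            = (if po = 0 then ca else if po = 1 then cb else 0)
          rw [if_neg (by omega), if_neg (by omega), if_neg (by omega)]
        · rw [Equiv.swap_apply_of_ne_of_ne (hne i a (by show (i:ℕ) ≠ 0; omega))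
              (hne i b (by show (i:ℕ) ≠ pe; omega)),
            Equiv.swap_apply_of_ne_of_ne (hne i c (by show (i:ℕ) ≠ 1; omega))
              (hne i d (by show (i:ℕ) ≠ po; omega))]
          show (if n - 2 ≤ (i:ℕ) then pref n lam (i:ℕ) else 0)
            = (if (i:ℕ) = 0 then ca else if (i:ℕ) = 1 then cb else 0)
          have := i.isLt
          rw [if_neg (by omega), if_neg (by omega), if_neg (by omega)]

/-- The carrier set of the right-hand side. -/
def Cset (n : ℕ) : Set (Fin n → ℤ) :=
  {lam | (∀ m : Fin n,
      0 ≤ ∑ k ∈ Finset.univ.filter (fun k : Fin n => k ≤ m ∧ Even (k : ℕ)), lam k) ∧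
    (∀ m : Fin n,
      0 ≤ ∑ k ∈ Finset.univ.filter (fun k : Fin n => k ≤ m ∧ Odd (k : ℕ)), lam k) ∧
    ∑ i ∈ Finset.univ.filter (fun i : Fin n => Odd (i : ℕ)), lam i ≤
      ∑ i ∈ Finset.univ.filter (fun i : Fin n => Even (i : ℕ)), lam i}

def Cmono (n : ℕ) : AddSubmonoid (Fin n → ℤ) where
  carrier := Cset n
  zero_mem' := by refine ⟨fun m => by simp, fun m => by simp, by simp⟩
  add_mem' := by
    rintro x y ⟨hx1, hx2, hx3⟩ ⟨hy1, hy2, hy3⟩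
    refine ⟨fun m => ?_, fun m => ?_, ?_⟩ <;>
      simp only [Pi.add_apply, Finset.sum_add_distrib]
    · exact add_nonneg (hx1 m) (hy1 m)
    · exact add_nonneg (hx2 m) (hy2 m)
    · exact add_le_add hx3 hy3

lemma gen_mem_Cset {n : ℕ} (i : ℕ) (h : i + 2 < n) :
    (Pi.single (⟨i, by omega⟩ : Fin n) 1 - Pi.single (⟨i + 2, h⟩ : Fin n) 1 : Fin n → ℤ)
      ∈ Cset n := by
  set p : Fin n := ⟨i, by omega⟩ with hp
  set q : Fin n := ⟨i + 2, h⟩ with hq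
  have key : ∀ s : Finset (Fin n), (q ∈ s → p ∈ s) →
      (0 : ℤ) ≤ ∑ k ∈ s, (Pi.single p 1 - Pi.single q 1 : Fin n → ℤ) k := by
    intro s hqp
    simp only [Pi.sub_apply, Finset.sum_sub_distrib, Finset.sum_pi_single']
    split_ifs with h1 h2 h2
    · norm_num
    · norm_num
    · exact absurd (hqp h2) h1
    · norm_num
  have keyeq : ∀ s : Finset (Fin n), (q ∈ s ↔ p ∈ s) →
      (0 : ℤ) = ∑ k ∈ s, (Pi.single p 1 - Pi.single q 1 : Fin n → ℤ) k := by
    intro s hqp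
    simp only [Pi.sub_apply, Finset.sum_sub_distrib, Finset.sum_pi_single']
    split_ifs with h1 h2 h2
    · norm_num
    · exact absurd (hqp.2 h1) h2
    · exact absurd (hqp.1 h2) h1
    · norm_num
  refine ⟨fun m => key _ ?_, fun m => key _ ?_, ?_⟩
  · simp only [mem_filter, mem_univ, true_and, Fin.le_def, Nat.even_iff, hp, hq]
    omega
  · simp only [mem_filter, mem_univ, true_and, Fin.le_def, Nat.odd_iff, hp, hq]
    omega
  · have h1 := keyeq (Finset.univ.filter (fun k : Fin n => Even (k : ℕ)))
      (by simp only [mem_filter, mem_univ, true_and, Nat.even_iff, hp, hq]; omega)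
    have h2 := keyeq (Finset.univ.filter (fun k : Fin n => Odd (k : ℕ)))
      (by simp only [mem_filter, mem_univ, true_and, Nat.odd_iff, hp, hq]; omega)
    omega

/-- The submonoid of nonnegative tuples with odd-sum at most even-sum. -/
def Dmono (n : ℕ) : AddSubmonoid (Fin n → ℤ) where
  carrier := {x | (∀ i, 0 ≤ x i) ∧
    ∑ i ∈ Finset.univ.filter (fun i : Fin n => Odd (i : ℕ)), x i ≤
      ∑ i ∈ Finset.univ.filter (fun i : Fin n => Even (i : ℕ)), x i}
  zero_mem' := by simp
  add_mem' := by
    rintro x y ⟨hx1, hx2⟩ ⟨hy1, hy2⟩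
    refine ⟨fun i => add_nonneg (hx1 i) (hy1 i), ?_⟩
    simp only [Pi.add_apply, Finset.sum_add_distrib]
    exact add_le_add hx2 hy2

lemma Dmono_mem (n : ℕ) : Dmono n ∈ {S : AddSubmonoid (Fin n → ℤ) | PartSet n ⊆ S ∧
    ∀ π : Equiv.Perm (Fin n), ParityPerm π → ∀ x ∈ S, (fun i => x (π i)) ∈ S} := by
  classical
  constructor
  · rintro x ⟨hdec, hpos⟩
    refine ⟨hpos, ?_⟩
    set pred : Fin n → Fin n :=
      fun k => ⟨(k : ℕ) - 1, lt_of_le_of_lt (Nat.sub_le _ _) k.isLt⟩ with hpred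
    calc ∑ i ∈ Finset.univ.filter (fun i : Fin n => Odd (i : ℕ)), x i
        ≤ ∑ i ∈ Finset.univ.filter (fun i : Fin n => Odd (i : ℕ)), x (pred i) := by
          refine Finset.sum_le_sum fun i _ => ?_
          exact hdec (pred i) i (Nat.sub_le _ _)
      _ = ∑ i ∈ (Finset.univ.filter (fun i : Fin n => Odd (i : ℕ))).image pred, x i := by
          refine (Finset.sum_image ?_).symm
          intro a ha b hb hab
          simp only [mem_filter, mem_univ, true_and, Nat.odd_iff] at ha hb
          have : (a : ℕ) - 1 = (b : ℕ) - 1 := congrArg Fin.val hab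
          exact Fin.ext (by simp only [coe_filter, Set.mem_setOf_eq, mem_coe, mem_filter, mem_univ, true_and, Nat.odd_iff] at ha hb; omega)
      _ ≤ ∑ i ∈ Finset.univ.filter (fun i : Fin n => Even (i : ℕ)), x i := by
          refine Finset.sum_le_sum_of_subset_of_nonneg ?_ (fun i _ _ => hpos i)
          intro j hj
          simp only [mem_image, mem_filter, mem_univ, true_and, Nat.odd_iff] at hj ⊢
          obtain ⟨k, hk, rfl⟩ := hj
          simp only [Nat.even_iff, hpred]
          omega
  · intro π hπ x hx
    refine ⟨fun i => hx.1 _, ?_⟩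
    have he : ∑ k ∈ Finset.univ.filter (fun k : Fin n => Even (k : ℕ)), x (π k)
        = ∑ k ∈ Finset.univ.filter (fun k : Fin n => Even (k : ℕ)), x k := by
      refine Finset.sum_equiv π (fun k => ?_) (fun k _ => rfl)
      simp only [mem_filter, mem_univ, true_and, Nat.even_iff, hπ k]
    have ho : ∑ k ∈ Finset.univ.filter (fun k : Fin n => Odd (k : ℕ)), x (π k)
        = ∑ k ∈ Finset.univ.filter (fun k : Fin n => Odd (k : ℕ)), x k := by
      refine Finset.sum_equiv π (fun k => ?_) (fun k _ => rfl)
      simp only [mem_filter, mem_univ, true_and, Nat.odd_iff, hπ k]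
    rw [he, ho]
    exact hx.2

/-- `Ψ_1 = Ψ_0 + Φ⁺` consists of all `λ ∈ ℤ^n` such that all initial partial sums of the
odd part `(λ_1, λ_3, …)` and of the even part `(λ_2, λ_4, …)` are nonnegative, and
`∑_{i even} λ_i ≤ ∑_{i odd} λ_i` (1-based parity; 1-based odd is 0-based even). -/
theorem Psi1_eq_carrier (n : ℕ) (hn : 2 ≤ n) :
    ((Psi0 n ⊔ PhiPlus n : AddSubmonoid (Fin n → ℤ)) : Set (Fin n → ℤ)) =
      {lam | (∀ m : Fin n,
          0 ≤ ∑ k ∈ Finset.univ.filter (fun k : Fin n => k ≤ m ∧ Even (k : ℕ)), lam k) ∧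
        (∀ m : Fin n,
          0 ≤ ∑ k ∈ Finset.univ.filter (fun k : Fin n => k ≤ m ∧ Odd (k : ℕ)), lam k) ∧
        ∑ i ∈ Finset.univ.filter (fun i : Fin n => Odd (i : ℕ)), lam i ≤
          ∑ i ∈ Finset.univ.filter (fun i : Fin n => Even (i : ℕ)), lam i} := by
  have hsub : Psi0 n ⊔ PhiPlus n ≤ Cmono n := by
    refine sup_le ?_ ?_
    · refine le_trans (sInf_le (Dmono_mem n)) ?_
      rintro x ⟨hx1, hx2⟩
      exact ⟨fun m => Finset.sum_nonneg fun k _ => hx1 k,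
        fun m => Finset.sum_nonneg fun k _ => hx1 k, hx2⟩
    · rw [PhiPlus]
      refine AddSubmonoid.closure_le.2 ?_
      rintro v ⟨i, h, rfl⟩
      exact gen_mem_Cset i h
  refine Set.Subset.antisymm hsub ?_
  rintro lam ⟨h1, h2, h3⟩
  have hpon : n - 1 - n % 2 < n := by omega
  have hpen : n - 2 + n % 2 < n := by omega
  have hb : 0 ≤ pref n lam (n - 1 - n % 2) := by
    rw [pref_eq_O lam hpon (by omega)]
    exact h2 ⟨n - 1 - n % 2, hpon⟩
  have hab : pref n lam (n - 1 - n % 2) ≤ pref n lam (n - 2 + n % 2) := by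
    rw [pref_tot_O lam hpon (by omega) (by omega), pref_tot_E lam hpen (by omega) (by omega)]
    exact h3
  have hmu := muF_mem_Psi0 hn lam hb hab
  have hphi : (∑ i ∈ Finset.range (n - 2), pref n lam i • gen n i) ∈ PhiPlus n := by
    refine AddSubmonoid.sum_mem _ fun i hi => ?_
    rw [Finset.mem_range] at hi
    have hin : i < n := by omega
    refine smul_gen_mem (by omega) ?_
    by_cases hp : i % 2 = 0
    · rw [pref_eq_E lam hin hp]
      exact h1 ⟨i, hin⟩
    · rw [pref_eq_O lam hin (by omega)]
      exact h2 ⟨i, hin⟩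
  show lam ∈ (Psi0 n ⊔ PhiPlus n : AddSubmonoid (Fin n → ℤ))
  rw [key_identity n lam]
  exact AddSubmonoid.add_mem _ (AddSubmonoid.mem_sup_left hmu) (AddSubmonoid.mem_sup_right hphi)
end
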